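/- Let r be an even positive integer. For every finite simple graph H, there exists a finite simple chordal graph G such that G^r contains an induced subgraph isomorphic to H. -/

import Mathlib

open SimpleGraph

namespace Paper

/-- A tree decomposition of a graph `G`. -/
structure TreeDecomp {V : Type} (G : SimpleGraph V) where
  ι : Type
  fin : Fintype ι
  tree : SimpleGraph ι
  isTree : tree.IsTree
  bag : ι → Set V
  mem_bag : ∀ v : V, ∃ t, v ∈ bag t
  edge_bag : ∀ ⦃u w : V⦄, G.Adj u w → ∃ t, u ∈ bag t ∧ w ∈ bag t
  coherent : ∀ v : V, (tree.induce {t | v ∈ bag t}).Connected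

/-- `M` is an induced matching in `G`: a set of edges, pairwise disjoint,
with no edge of `G` joining endpoints of distinct edges of `M`. -/
def IsInducedMatching {V : Type} (G : SimpleGraph V) (M : Finset (V × V)) : Prop :=
  (∀ p ∈ M, G.Adj p.1 p.2) ∧
    ∀ p ∈ M, ∀ q ∈ M, p ≠ q →
      (p.1 ≠ q.1 ∧ p.1 ≠ q.2 ∧ p.2 ≠ q.1 ∧ p.2 ≠ q.2) ∧
      (¬ G.Adj p.1 q.1 ∧ ¬ G.Adj p.1 q.2 ∧ ¬ G.Adj p.2 q.1 ∧ ¬ G.Adj p.2 q.2)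

/-- Every edge of `M` has an endpoint in `X`. -/
def Touches {V : Type} (M : Finset (V × V)) (X : Set V) : Prop :=
  ∀ p ∈ M, p.1 ∈ X ∨ p.2 ∈ X

/-- μ(𝒯): the maximum size of an induced matching of `G` all of whose edges
touch a common bag of the tree decomposition `D`. -/
noncomputable def mu {V : Type} (G : SimpleGraph V) (D : TreeDecomp G) : ℕ :=
  sSup {n | ∃ (t : D.ι) (M : Finset (V × V)),
    IsInducedMatching G M ∧ Touches M (D.bag t) ∧ M.card = n}

/-- Induced matching treewidth: minimum of μ(𝒯) over tree decompositions. -/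
noncomputable def treeMu {V : Type} (G : SimpleGraph V) : ℕ :=
  sInf {n | ∃ D : TreeDecomp G, mu G D = n}

/-- `S` is an independent set of `G`. -/
def IsIndepSet {V : Type} (G : SimpleGraph V) (S : Finset V) : Prop :=
  ∀ u ∈ S, ∀ v ∈ S, u ≠ v → ¬ G.Adj u v

/-- α(𝒯): the maximum size of an independent set of `G` contained in a bag. -/
noncomputable def alphaTD {V : Type} (G : SimpleGraph V) (D : TreeDecomp G) : ℕ :=
  sSup {n | ∃ (t : D.ι) (S : Finset V),
    IsIndepSet G S ∧ ↑S ⊆ D.bag t ∧ S.card = n}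

/-- Tree-independence number: minimum of α(𝒯) over tree decompositions. -/
noncomputable def treeAlpha {V : Type} (G : SimpleGraph V) : ℕ :=
  sInf {n | ∃ D : TreeDecomp G, alphaTD G D = n}

/-- The `k`-th power of `G`: distinct vertices adjacent iff their distance in `G`
is at most `k` (for `k = 0` this is the edgeless graph). -/
def power {V : Type} (G : SimpleGraph V) (k : ℕ) : SimpleGraph V :=
  SimpleGraph.fromRel (fun u v => G.Reachable u v ∧ G.dist u v ≤ k)

/-- The graph `G°[ℋ]` for a family `ℋ = {H j}` of subgraphs of `G`: vertices are
indices `j`, two distinct indices adjacent iff the subgraphs share a vertex or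
there is an edge of `G` between them. -/
def blowup {V J : Type} (G : SimpleGraph V) (H : J → G.Subgraph) : SimpleGraph J :=
  SimpleGraph.fromRel (fun i j =>
    ((H i).verts ∩ (H j).verts).Nonempty ∨
      ∃ u ∈ (H i).verts, ∃ v ∈ (H j).verts, G.Adj u v)


section Aux


variable {W : Type} (H : SimpleGraph W) (s : ℕ)

/-- vertex type -/
abbrev UU (W : Type) (s : ℕ) : Type := (W × Fin s) ⊕ Sym2 W

def gadj : UU W s → UU W s → Prop
  | .inl (u, i), .inl (w, j) => u = w ∧ ((i : ℕ) + 1 = j ∨ (j : ℕ) + 1 = i)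
  | .inl (u, i), .inr e => (i : ℕ) + 1 = s ∧ u ∈ e ∧ e ∈ H.edgeSet
  | .inr e, .inl (u, i) => (i : ℕ) + 1 = s ∧ u ∈ e ∧ e ∈ H.edgeSet
  | .inr e, .inr e' => e ≠ e'

def GG : SimpleGraph (UU W s) where
  Adj := gadj H s
  symm := by
    constructor
    rintro (⟨u, i⟩ | e) (⟨w, j⟩ | e') h <;> simp only [gadj] at h ⊢ <;> tauto
  loopless := by
    constructor
    rintro (⟨u, i⟩ | e) h
    · simp only [gadj] at h
      omega
    · exact (h : e ≠ e) rfl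

lemma gg_ll {u w : W} {i j : Fin s} :
    (GG H s).Adj (.inl (u, i)) (.inl (w, j)) ↔ u = w ∧ ((i : ℕ) + 1 = j ∨ (j : ℕ) + 1 = i) :=
  Iff.rfl

lemma gg_lr {u : W} {i : Fin s} {e : Sym2 W} :
    (GG H s).Adj (.inl (u, i)) (.inr e) ↔ (i : ℕ) + 1 = s ∧ u ∈ e ∧ e ∈ H.edgeSet := Iff.rfl

lemma gg_rl {u : W} {i : Fin s} {e : Sym2 W} :
    (GG H s).Adj (.inr e) (.inl (u, i)) ↔ (i : ℕ) + 1 = s ∧ u ∈ e ∧ e ∈ H.edgeSet := Iff.rfl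

lemma gg_rr {e e' : Sym2 W} : (GG H s).Adj (.inr e) (.inr e') ↔ e ≠ e' := Iff.rfl





def lev {W : Type} {s : ℕ} : UU W s → ℕ
  | .inl (_, i) => (i : ℕ)
  | .inr _ => s

variable {W : Type} {H : SimpleGraph W} {s : ℕ}

lemma adj_lev {a b : UU W s} (h : (GG H s).Adj a b) :
    lev a ≤ lev b + 1 ∧ lev b ≤ lev a + 1 := by
  rcases a with ⟨u, i⟩ | e <;> rcases b with ⟨w, j⟩ | e'
  · rcases h with ⟨-, h | h⟩ <;> simp only [lev] <;> omega
  · rcases h with ⟨h, -⟩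
    simp only [lev]
    omega
  · rcases h with ⟨h, -⟩
    simp only [lev]
    omega
  · simp [lev]

lemma lip {a b : UU W s} (p : (GG H s).Walk a b) :
    lev a ≤ lev b + p.length ∧ lev b ≤ lev a + p.length := by
  induction p with
  | nil => simp
  | cons h q ih =>
    have := adj_lev h
    simp only [Walk.length_cons]
    omega

lemma key : ∀ {a b : UU W s} (p : (GG H s).Walk a b) (v : W) (j : Fin s),
      b = .inl (v, j) →
      (∀ u (i : Fin s), a = .inl (u, i) → u ≠ v →
        (s - (i : ℕ)) + (s - (j : ℕ)) ≤ p.length ∧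
          (p.length = (s - (i : ℕ)) + (s - (j : ℕ)) → H.Adj u v)) ∧
      (∀ e : Sym2 W, a = .inr e →
        s - (j : ℕ) ≤ p.length ∧ (p.length = s - (j : ℕ) → v ∈ e)) := by
  intro a b p
  induction p with
  | nil =>
    rintro v j rfl
    constructor
    · intro u i ha hne
      injection ha with ha
      exact absurd (congrArg Prod.fst ha).symm hne
    · intro e ha
      exact absurd ha (by simp)
  | @cons x y _ hadj q ih =>
    rintro v j rfl
    have ihvj := ih v j rfl
    have hj : (j : ℕ) < s := j.isLt
    constructor
    · rintro u i rfl hne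
      rcases y with ⟨w, i'⟩ | e
      · obtain ⟨rfl, hii⟩ := (gg_ll H s).mp hadj
        have hi : (i : ℕ) < s := i.isLt
        have hi' : (i' : ℕ) < s := i'.isLt
        have h1 := (ihvj.1 u i' rfl hne)
        refine ⟨by simp only [Walk.length_cons]; omega, ?_⟩
        intro heq
        simp only [Walk.length_cons] at heq
        exact h1.2 (by omega)
      · obtain ⟨his, hue, hedge⟩ := (gg_lr H s).mp hadj
        have h2 := ihvj.2 e rfl
        refine ⟨by simp only [Walk.length_cons]; omega, ?_⟩
        intro heq
        simp only [Walk.length_cons] at heq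
        have hv : v ∈ e := h2.2 (by omega)
        have : e = s(u, v) := (Sym2.mem_and_mem_iff hne).mp ⟨hue, hv⟩
        rw [this] at hedge
        exact hedge
    · rintro e rfl
      rcases y with ⟨w, i'⟩ | e'
      · obtain ⟨his, hwe, hedge⟩ := (gg_rl H s).mp hadj
        by_cases hwv : w = v
        · subst hwv
          have hl := (lip q).1
          simp only [lev] at hl
          refine ⟨by simp only [Walk.length_cons]; omega, ?_⟩
          intro _; exact hwe
        · have h1 := ihvj.1 w i' rfl hwv
          have hi' : (i' : ℕ) < s := i'.isLt
          refine ⟨by simp only [Walk.length_cons]; omega, ?_⟩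
          intro heq
          simp only [Walk.length_cons] at heq
          omega
      · have h2 := ihvj.2 e' rfl
        refine ⟨by simp only [Walk.length_cons]; omega, ?_⟩
        intro heq
        simp only [Walk.length_cons] at heq
        omega





variable {W : Type} {H : SimpleGraph W} {s : ℕ}


lemma walk_down (u : W) (hs : 0 < s) :
    ∀ (i : ℕ) (h : i < s), ∃ p : (GG H s).Walk (.inl (u, ⟨i, h⟩)) (.inl (u, ⟨0, hs⟩)),
      p.length = i := by
  intro i
  induction i with
  | zero => exact fun h => ⟨Walk.nil, rfl⟩
  | succ i ihw =>
    intro h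
    obtain ⟨p, hp⟩ := ihw (by omega)
    have hadj : (GG H s).Adj (.inl (u, ⟨i + 1, h⟩)) (.inl (u, ⟨i, by omega⟩)) :=
      (gg_ll H s).mpr ⟨rfl, Or.inr rfl⟩
    exact ⟨Walk.cons hadj p, by simp [hp]⟩

lemma walk_of_adj (hs : 0 < s) {u v : W} (huv : H.Adj u v) :
    ∃ p : (GG H s).Walk (.inl (u, ⟨0, hs⟩)) (.inl (v, ⟨0, hs⟩)), p.length = s + s := by
  obtain ⟨pu, hpu⟩ := walk_down (H := H) u hs (s - 1) (by omega)
  obtain ⟨pv, hpv⟩ := walk_down (H := H) v hs (s - 1) (by omega)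
  have hedge : s(u, v) ∈ H.edgeSet := huv
  have e1 : (GG H s).Adj (.inl (u, ⟨s - 1, by omega⟩)) (.inr s(u, v)) :=
    (gg_lr H s).mpr ⟨by simp; omega, Sym2.mem_mk_left u v, hedge⟩
  have e2 : (GG H s).Adj (.inr s(u, v)) (.inl (v, ⟨s - 1, by omega⟩)) :=
    (gg_rl H s).mpr ⟨by simp; omega, Sym2.mem_mk_right u v, hedge⟩
  refine ⟨pu.reverse.append (Walk.cons e1 (Walk.cons e2 pv)), ?_⟩
  simp [Walk.length_append, Walk.length_reverse, hpu, hpv]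
  omega

lemma power_iff (hs : 0 < s) {u v : W} :
    (power (GG H s) (s + s)).Adj (.inl (u, ⟨0, hs⟩)) (.inl (v, ⟨0, hs⟩)) ↔ H.Adj u v := by
  rw [power, fromRel_adj]
  constructor
  · rintro ⟨hne, hrel⟩
    have hune : u ≠ v := by rintro rfl; exact hne rfl
    have hrel' : (GG H s).Reachable (.inl (u, ⟨0, hs⟩)) (.inl (v, ⟨0, hs⟩)) ∧
        (GG H s).dist (.inl (u, ⟨0, hs⟩)) (.inl (v, ⟨0, hs⟩)) ≤ s + s := by
      rcases hrel with h | h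
      · exact h
      · exact ⟨h.1.symm, by rw [SimpleGraph.dist_comm]; exact h.2⟩
    obtain ⟨p, hp⟩ := hrel'.1.exists_walk_length_eq_dist
    have hk := (key p v ⟨0, hs⟩ rfl).1 u ⟨0, hs⟩ rfl hune
    simp only [Fin.val_mk, Nat.sub_zero] at hk
    exact hk.2 (by omega)
  · intro huv
    obtain ⟨p, hp⟩ := walk_of_adj hs huv
    refine ⟨?_, Or.inl ⟨⟨p⟩, hp ▸ SimpleGraph.dist_le p⟩⟩
    intro hc
    injection hc with hc
    exact huv.ne (congrArg Prod.fst hc)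





variable {W : Type} {H : SimpleGraph W} {s : ℕ} {m : ℕ}

lemma fin_val11 : ((1 + 1 : Fin (m + 2 + 2)) : ℕ) = 2 := by
  rw [Fin.add_def]
  simp [Fin.val_one]

lemma fin_val111 : ((1 + 1 + 1 : Fin (m + 2 + 2)) : ℕ) = 3 := by
  rw [Fin.add_def, fin_val11]
  simp only [Fin.val_one]
  rw [Nat.mod_eq_of_lt (by omega)]

lemma fin_ne11 (i : Fin (m + 2 + 2)) : i ≠ i + 1 + 1 := by
  intro h
  have h2 : i + 0 = i + (1 + 1) := by rw [add_zero, ← add_assoc]; exact h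
  have h3 : (0 : Fin (m + 2 + 2)) = 1 + 1 := add_left_cancel h2
  have := congrArg Fin.val h3
  rw [fin_val11] at this
  simp at this

lemma cyc_adj1 (i : Fin (m + 2 + 2)) : (cycleGraph (m + 2 + 2)).Adj i (i + 1) := by
  rw [cycleGraph_adj]
  right
  exact add_sub_cancel_left i 1

lemma cyc_nadj2 (i : Fin (m + 2 + 2)) : ¬ (cycleGraph (m + 2 + 2)).Adj i (i + 1 + 1) := by
  rw [cycleGraph_adj]
  rintro (h | h)
  · have h1 : i - (i + (1 + 1)) = 1 := by rw [← add_assoc]; exact h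
    have hx : i - (i + (1 + 1)) = -(1 + 1) := by
      rw [sub_add_eq_sub_sub, sub_self, zero_sub]
    have h2 : -(1 + 1) = (1 : Fin (m + 2 + 2)) := hx ▸ h1
    have h3 : (0 : Fin (m + 2 + 2)) = 1 + 1 + 1 := by
      have := congrArg (· + (1 + 1)) h2
      simpa [add_comm, add_assoc, add_left_comm] using this
    have h4 := congrArg Fin.val h3
    rw [fin_val111] at h4
    simp at h4
  · have h1 : i + (1 + 1) - i = 1 := by rw [← add_assoc]; exact h
    rw [add_sub_cancel_left] at h1
    have h4 := congrArg Fin.val h1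
    rw [fin_val11, Fin.val_one] at h4
    omega





variable {W : Type} {H : SimpleGraph W} {s : ℕ} {m : ℕ}

lemma no_cycle (m : ℕ) (c : cycleGraph (m + 2 + 2) ↪g GG H s) : False := by
  have hnb : ∀ (i : Fin (m + 2 + 2)) (u : W) (jj : Fin s), (jj : ℕ) + 1 < s →
      c i = .inl (u, jj) → ∃ (j1 j2 : Fin s),
        c (i + 1) = .inl (u, j1) ∧ c (i - 1) = .inl (u, j2) ∧
        ((jj : ℕ) + 1 = j1 ∨ (j1 : ℕ) + 1 = jj) ∧
        ((jj : ℕ) + 1 = j2 ∨ (j2 : ℕ) + 1 = jj) ∧ j1 ≠ j2 := by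
    intro i u jj hlt hci
    have hA : (GG H s).Adj (c i) (c (i + 1)) := c.map_rel_iff.mpr (cyc_adj1 i)
    have hB : (GG H s).Adj (c (i - 1)) (c i) := by
      refine c.map_rel_iff.mpr ?_
      have := cyc_adj1 (i - 1)
      rwa [sub_add_cancel] at this
    rw [hci] at hA hB
    rcases hq1 : c (i + 1) with ⟨w1, j1⟩ | e1
    · rcases hq2 : c (i - 1) with ⟨w2, j2⟩ | e2
      · rw [hq1] at hA
        rw [hq2] at hB
        obtain ⟨rfl, hv1⟩ := (gg_ll H s).mp hA
        obtain ⟨hw2, hv2⟩ := (gg_ll H s).mp hB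
        subst hw2
        refine ⟨j1, j2, rfl, rfl, hv1, by omega, ?_⟩
        rintro rfl
        have : i + 1 = i - 1 := c.injective (hq1.trans hq2.symm)
        have h2 : i + 1 + 1 = i := by rw [this, sub_add_cancel]
        exact fin_ne11 i h2.symm
      · rw [hq2] at hB
        obtain ⟨h, -⟩ := (gg_rl H s).mp hB
        omega
    · rw [hq1] at hA
      obtain ⟨h, -⟩ := (gg_lr H s).mp hA
      omega
  have hlow : ∀ (k : ℕ) (i : Fin (m + 2 + 2)) (u : W) (jj : Fin s),
      (jj : ℕ) = k → (jj : ℕ) + 1 < s → c i ≠ .inl (u, jj) := by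
    intro k
    induction k with
    | zero =>
      intro i u jj hk hlt hci
      obtain ⟨j1, j2, h1, h2, hv1, hv2, hne⟩ := hnb i u jj hlt hci
      have : j1 = j2 := Fin.val_injective (by omega)
      exact hne this
    | succ k ihk =>
      intro i u jj hk hlt hci
      obtain ⟨j1, j2, h1, h2, hv1, hv2, hne⟩ := hnb i u jj hlt hci
      rcases hv1 with hv1 | hv1
      · rcases hv2 with hv2 | hv2
        · exact hne (Fin.val_injective (by omega))
        · exact ihk (i - 1) u j2 (by omega) (by omega) h2
      · exact ihk (i + 1) u j1 (by omega) (by omega) h1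
  have hclass : ∀ i : Fin (m + 2 + 2),
      (∃ e, c i = .inr e) ∨ (∃ u jj, c i = .inl (u, jj) ∧ (jj : ℕ) + 1 = s) := by
    intro i
    rcases hq : c i with ⟨u, jj⟩ | e
    · right
      refine ⟨u, jj, rfl, ?_⟩
      by_contra hne
      exact hlow jj.val i u jj rfl (by have := jj.isLt; omega) hq
    · exact Or.inl ⟨e, rfl⟩
  have hXX : ∀ (i k : Fin (m + 2 + 2)) (e e' : Sym2 W), c i = .inr e → c k = .inr e' →
      ¬ (cycleGraph (m + 2 + 2)).Adj i k → i ≠ k → False := by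
    intro i k e e' hi hk hna hne
    have hee : e ≠ e' := by rintro rfl; exact hne (c.injective (hi.trans hk.symm))
    have hadj : (GG H s).Adj (c i) (c k) := by rw [hi, hk]; exact (gg_rr H s).mpr hee
    exact hna (c.map_rel_iff.mp hadj)
  have hLX : ∀ (i k : Fin (m + 2 + 2)) (u : W) (jj : Fin s), c i = .inl (u, jj) →
      (jj : ℕ) + 1 = s → (cycleGraph (m + 2 + 2)).Adj i k → ∃ e, c k = .inr e := by
    intro i k u jj hi hjj hadj
    rcases hclass k with h | ⟨w, jj', hk, hjj'⟩
    · exact h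
    · exfalso
      have hadj2 : (GG H s).Adj (c i) (c k) := c.map_rel_iff.mpr hadj
      rw [hi, hk] at hadj2
      obtain ⟨-, h⟩ := (gg_ll H s).mp hadj2
      omega
  have hnoX : ∀ (b : Fin (m + 2 + 2)) (e : Sym2 W), c b ≠ .inr e := by
    intro b e hb
    have h2 : ∃ u jj, c (b + 1 + 1) = .inl (u, jj) ∧ (jj : ℕ) + 1 = s := by
      rcases hclass (b + 1 + 1) with ⟨e', h⟩ | h
      · exact (hXX b (b + 1 + 1) e e' hb h (cyc_nadj2 b) (fin_ne11 b)).elim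
      · exact h
    obtain ⟨u, jj, h2, hjj⟩ := h2
    obtain ⟨e1, h1⟩ := hLX (b + 1 + 1) (b + 1) u jj h2 hjj ((cyc_adj1 (b + 1)).symm)
    obtain ⟨e3, h3⟩ := hLX (b + 1 + 1) (b + 1 + 1 + 1) u jj h2 hjj (cyc_adj1 (b + 1 + 1))
    exact hXX (b + 1) (b + 1 + 1 + 1) e1 e3 h1 h3 (cyc_nadj2 (b + 1)) (fin_ne11 (b + 1))
  rcases hclass 0 with ⟨e, h⟩ | ⟨u, jj, h0, hjj⟩
  · exact hnoX 0 e h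
  · have hadj01 : (cycleGraph (m + 2 + 2)).Adj 0 (0 + 1) := cyc_adj1 0
    obtain ⟨e, h1⟩ := hLX 0 (0 + 1) u jj h0 hjj hadj01
    exact hnoX (0 + 1) e h1



end Aux

/-- A graph is chordal iff it has no induced cycle of length at least 4. -/
def Chordal {V : Type} (G : SimpleGraph V) : Prop :=
  ∀ n : ℕ, 4 ≤ n → IsEmpty (SimpleGraph.cycleGraph n ↪g G)

/-- for even positive `r`, every finite graph `H` appears as an
induced subgraph of the `r`-th power of some finite chordal graph `G`. -/
theorem stmt8 (r : ℕ) (hr : 0 < r) (heven : Even r)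
    {W : Type} [Fintype W] (H : SimpleGraph W) :
    ∃ (U : Type) (_ : Fintype U) (G : SimpleGraph U),
      Chordal G ∧ Nonempty (H ↪g power G r) := by
  obtain ⟨s, rfl⟩ := heven
  have hs : 0 < s := by omega
  haveI := Classical.decEq W
  refine ⟨UU W s, inferInstance, GG H s, ?_, ?_⟩
  · intro n hn
    obtain ⟨m, rfl⟩ : ∃ m, n = m + 2 + 2 := ⟨n - 4, by omega⟩
    exact ⟨fun c => (no_cycle m c).elim⟩
  · refine ⟨⟨⟨fun w => .inl (w, ⟨0, hs⟩), ?_⟩, ?_⟩⟩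
    · intro a b h
      injection h with h
      exact congrArg Prod.fst h
    · intro a b
      exact power_iff hs


end Paper
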